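/- The third Cartesian component of the induction equation holds for the explicit fields: for every μ ≥ 0 and all t ∈ [0,T*), x ∈ ℝ³, ∂_t H̄₃(t,x) = μ ΔH̄₃(t,x) + Σ_{i=1}^{3} H̄ᵢ(t,x) ∂_{x_i}v̄₃(t,x) − Σ_{i=1}^{3} v̄ᵢ(t,x) ∂_{x_i}H̄₃(t,x). -/

import Mathlib

/-- Partial derivative of `f : ℝ³ → ℝ` in the `j`-th coordinate direction at `x`. -/
noncomputable def pd (f : (Fin 3 → ℝ) → ℝ) (j : Fin 3) (x : Fin 3 → ℝ) : ℝ :=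
  deriv (fun s => f (Function.update x j s)) (x j)

/-- Laplacian of `f : ℝ³ → ℝ` at `x`. -/
noncomputable def lap (f : (Fin 3 → ℝ) → ℝ) (x : Fin 3 → ℝ) : ℝ :=
  ∑ j : Fin 3, pd (fun y => pd f j y) j x

/-- The explicit blowup velocity field `v̄`. -/
noncomputable def vbar (T a k : ℝ) (t : ℝ) (x : Fin 3 → ℝ) : Fin 3 → ℝ :=
  ![a * x 0 / (T - t) + k * x 1 * (T - t) ^ (2 * a),
    a * x 1 / (T - t) - k * x 0 * (T - t) ^ (2 * a),
    -2 * a * x 2 / (T - t)]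

/-- The explicit blowup magnetic field `H̄`. -/
noncomputable def Hbar (T a ab k : ℝ) (t : ℝ) (x : Fin 3 → ℝ) : Fin 3 → ℝ :=
  ![ab * x 0 + 2 * ab * k * x 1 * x 2 * (T - t) ^ (2 * a + 1) / (4 * a + 1),
    ab * x 1 - 2 * ab * k * x 0 * x 2 * (T - t) ^ (2 * a + 1) / (4 * a + 1),
    -2 * ab * x 2]

/-- the third Cartesian component of the induction equation holds
for the explicit fields. -/
theorem third_induction_component (T a ab k : ℝ) (hT : 0 < T)
    (hk : k ≠ 0) (hab : ab ≠ 0) (ha : a ≠ 0) (ha' : a ≠ -(1 / 4)) :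
    ∀ μ : ℝ, 0 ≤ μ →
    ∀ t ∈ Set.Ico (0 : ℝ) T, ∀ x : Fin 3 → ℝ,
      deriv (fun s => Hbar T a ab k s x 2) t
        = μ * lap (fun y => Hbar T a ab k t y 2) x
          + (∑ i : Fin 3, Hbar T a ab k t x i * pd (fun y => vbar T a k t y 2) i x)
          - (∑ i : Fin 3, vbar T a k t x i * pd (fun y => Hbar T a ab k t y 2) i x) := by
  intro μ hμ t ht x
  have hTt : T - t ≠ 0 := by
    have := ht.2; intro h; linarith
  simp only [Hbar, vbar, lap, pd, Fin.sum_univ_three, Matrix.cons_val_zero,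
    Matrix.cons_val_one, Matrix.head_cons, Matrix.cons_val_two, Matrix.tail_cons]
  norm_num [Function.update_apply, show ((2:Fin 3) = 0) ↔ False from by decide,
    show ((2:Fin 3) = 1) ↔ False from by decide]
  have hmul : ∀ c : ℝ, deriv (HMul.hMul c) = fun _ : ℝ => c := by
    intro c; funext s
    show deriv (fun y : ℝ => c * y) s = c
    rw [deriv_const_mul _ differentiable_id.differentiableAt]; simp
  field_simp
  ring
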